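/- Let Y ~ N_n(μ, σ²I_n) be a Gaussian vector and K ⊆ ℝ^n a nonempty convex compact set. Then P(Y ∈ K) ≤ exp(-‖μ - P_K(μ)‖²/(2σ²)), where P_K(μ) is the Euclidean projection of μ onto K. -/

import Mathlib

open MeasureTheory Real RealInnerProductSpace Filter

/-- Chernoff approximation: for `Y ~ N_n(μ, σ² I)` and a nonempty convex compact set `K`,
`P(Y ∈ K) ≤ exp(-‖μ - P_K(μ)‖² / (2σ²))`, where `‖μ - P_K(μ)‖ = infDist μ K`. -/
theorem stmt1 {n : ℕ} (μ : EuclideanSpace ℝ (Fin n)) (σ : ℝ) (hσ : 0 < σ)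
    (K : Set (EuclideanSpace ℝ (Fin n))) (hK : Convex ℝ K) (hKc : IsCompact K)
    (hKne : K.Nonempty) :
    ((volume.withDensity (fun y => ENNReal.ofReal
        ((2 * Real.pi * σ ^ 2) ^ (-(n : ℝ) / 2) *
          Real.exp (-‖y - μ‖ ^ 2 / (2 * σ ^ 2))))) K).toReal
      ≤ Real.exp (-(Metric.infDist μ K) ^ 2 / (2 * σ ^ 2)) := by
  obtain ⟨P, hPK, hPd⟩ := hKc.exists_infDist_eq_dist hKne μ
  set d : ℝ := Metric.infDist μ K with hd
  -- inner product condition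
  have hnormP : ‖μ - P‖ = ⨅ w : K, ‖μ - w‖ := by
    rw [← dist_eq_norm, ← hPd, hd, Metric.infDist_eq_iInf]
    simp_rw [dist_eq_norm]
  have hinner : ∀ y ∈ K, inner ℝ (μ - P) (y - P) ≤ (0:ℝ) :=
    (norm_eq_iInf_iff_real_inner_le_zero hK hPK).mp hnormP
  have hdP : d = ‖μ - P‖ := by rw [hPd, dist_eq_norm]
  -- pointwise bound on K
  have key : ∀ y ∈ K, ‖y - μ‖ ^ 2 ≥ ‖y - P‖ ^ 2 + d ^ 2 := by
    intro y hy
    have h1 : y - μ = (y - P) - (μ - P) := by abel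
    have h2 : inner ℝ (μ - P) (y - P) ≤ (0:ℝ) := hinner y hy
    rw [h1, norm_sub_sq_real, hdP]
    have h3 : inner ℝ (y - P) (μ - P) ≤ (0:ℝ) := by rwa [real_inner_comm]
    nlinarith [h3]
  -- analytic part
  clear hnormP hinner
  set b : ℝ := 1 / (2 * σ ^ 2) with hb
  have hbpos : 0 < b := by positivity
  set C : ℝ := (2 * Real.pi * σ ^ 2) ^ (-(n : ℝ) / 2) with hC
  have hCpos : 0 < C := Real.rpow_pos_of_pos (by positivity) _
  set e : ℝ := rexp (-d ^ 2 / (2 * σ ^ 2)) with he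
  have hepos : 0 < e := Real.exp_pos _
  set g : EuclideanSpace ℝ (Fin n) → ℝ := fun y => e * (C * rexp (-b * ‖y - P‖ ^ 2)) with hg
  -- integrability of g
  have hgint : Integrable g := by
    have h0 : Integrable (fun v : EuclideanSpace ℝ (Fin n) =>
        Complex.exp (-(b:ℂ) * (‖v‖:ℂ) ^ 2 + 0 * (inner ℝ (0 : EuclideanSpace ℝ (Fin n)) v : ℝ))) :=
      GaussianFourier.integrable_cexp_neg_mul_sq_norm_add (by simpa using hbpos) 0 0
    have h1 : Integrable (fun v : EuclideanSpace ℝ (Fin n) => rexp (-b * ‖v‖ ^ 2)) := by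
      have := h0.norm
      refine this.congr (Filter.Eventually.of_forall fun v => ?_)
      simp [Complex.norm_exp]
      left; norm_cast
    have h2 : Integrable (fun y : EuclideanSpace ℝ (Fin n) => rexp (-b * ‖y - P‖ ^ 2)) :=
      h1.comp_sub_right P
    exact (h2.const_mul C).const_mul e
  have hgnn : ∀ y, 0 ≤ g y := fun y => by positivity
  -- integral of g equals e
  have hgintval : ∫ y, g y = e := by
    rw [hg]
    rw [integral_const_mul, integral_const_mul,
      integral_sub_right_eq_self (fun v : EuclideanSpace ℝ (Fin n) => rexp (-b * ‖v‖ ^ 2)) P,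
      GaussianFourier.integral_rexp_neg_mul_sq_norm hbpos]
    have hfr : (Module.finrank ℝ (EuclideanSpace ℝ (Fin n)) : ℝ) = (n : ℝ) := by
      rw [finrank_euclideanSpace_fin]
    have hpb : Real.pi / b = 2 * Real.pi * σ ^ 2 := by
      rw [hb, div_div_eq_mul_div, div_one]; ring
    rw [hpb, hfr, hC]
    rw [← Real.rpow_add (by positivity), show (-(n:ℝ)/2 + (n:ℝ)/2) = 0 by ring,
      Real.rpow_zero, mul_one]
  -- pointwise bound on K
  have hbound : ∀ y ∈ K, C * rexp (-‖y - μ‖ ^ 2 / (2 * σ ^ 2)) ≤ g y := by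
    intro y hy
    have h1 := key y hy
    have h2 : rexp (-‖y - μ‖ ^ 2 / (2 * σ ^ 2)) ≤ e * rexp (-b * ‖y - P‖ ^ 2) := by
      rw [he, ← Real.exp_add]
      apply Real.exp_le_exp.mpr
      rw [hb]
      have hσ2 : (0:ℝ) < 2 * σ ^ 2 := by positivity
      have heq : -d ^ 2 / (2 * σ ^ 2) + -(1 / (2 * σ ^ 2)) * ‖y - P‖ ^ 2
          = (-(d ^ 2) + -‖y - P‖ ^ 2) / (2 * σ ^ 2) := by ring
      rw [heq, div_le_div_iff_of_pos_right hσ2]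
      linarith [key y hy]
    calc C * rexp (-‖y - μ‖ ^ 2 / (2 * σ ^ 2)) ≤ C * (e * rexp (-b * ‖y - P‖ ^ 2)) := by
          exact mul_le_mul_of_nonneg_left h2 hCpos.le
      _ = g y := by rw [hg]; ring
  -- measure computation
  rw [withDensity_apply _ hKc.measurableSet]
  have hle : ∫⁻ y in K, ENNReal.ofReal (C * rexp (-‖y - μ‖ ^ 2 / (2 * σ ^ 2))) ∂volume
      ≤ ENNReal.ofReal e := by
    calc ∫⁻ y in K, ENNReal.ofReal (C * rexp (-‖y - μ‖ ^ 2 / (2 * σ ^ 2))) ∂volume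
        ≤ ∫⁻ y in K, ENNReal.ofReal (g y) ∂volume := by
          refine setLIntegral_mono' hKc.measurableSet fun y hy => ?_
          exact ENNReal.ofReal_le_ofReal (hbound y hy)
      _ ≤ ∫⁻ y, ENNReal.ofReal (g y) ∂volume := setLIntegral_le_lintegral _ _
      _ = ENNReal.ofReal (∫ y, g y) :=
          (ofReal_integral_eq_lintegral_ofReal hgint (Filter.Eventually.of_forall hgnn)).symm
      _ = ENNReal.ofReal e := by rw [hgintval]
  exact ENNReal.toReal_le_of_le_ofReal hepos.le hle
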